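/- arXiv:2401.07114 — 2 statements merged into one kernel-verified Lean document; each statement's English description precedes it below -/
import Mathlib

section
/- Let C : ℝⁿ → ℝ be a quadratic polynomial with gradient J ≠ 0 at z and Hessian H with spectral radius ρ. Let ε^G be a minimizer of ‖ε‖ subject to C(z+ε)=0, and let ε^S = −(C(z)/‖J‖²)Jᵀ be the Sampson step. Then ‖ε^S‖ ≤ ‖ε^G‖ + (ρ/(2‖J‖))·‖ε^G‖². -/
open Matrix

/-- The Euclidean norm of a vector in `ℝⁿ`. -/
noncomputable def euclNorm {n : ℕ} (v : Fin n → ℝ) : ℝ :=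
  Real.sqrt (∑ i, v i ^ 2)

/-- The spectral radius of a real square matrix. -/
noncomputable def specRad {m : ℕ} (A : Matrix (Fin m) (Fin m) ℝ) : ℝ :=
  ⨆ μ ∈ spectrum ℝ A, |μ|

lemma abs_le_specRad {m : ℕ} (A : Matrix (Fin m) (Fin m) ℝ) {μ : ℝ}
    (h : μ ∈ spectrum ℝ A) : |μ| ≤ specRad A := by
  obtain ⟨b, hb⟩ := (A.finite_spectrum.image abs).bddAbove
  have hbdd : BddAbove (Set.range fun μ => ⨆ _ : μ ∈ spectrum ℝ A, |μ|) := by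
    refine ⟨max b 0, ?_⟩
    rintro x ⟨ν, rfl⟩
    show (⨆ _ : ν ∈ spectrum ℝ A, |ν|) ≤ max b 0
    by_cases hν : ν ∈ spectrum ℝ A
    · rw [ciSup_pos (p := ν ∈ spectrum ℝ A) (f := fun _ => |ν|) hν]
      exact le_max_of_le_left (hb (Set.mem_image_of_mem _ hν))
    · haveI : IsEmpty (ν ∈ spectrum ℝ A) := ⟨hν⟩
      rw [Real.iSup_of_isEmpty]
      exact le_max_right _ _
  calc |μ| = ⨆ _ : μ ∈ spectrum ℝ A, |μ| :=
        (ciSup_pos (p := μ ∈ spectrum ℝ A) (f := fun _ => |μ|) h).symm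
    _ ≤ specRad A := le_ciSup hbdd μ

lemma quad_bound {m : ℕ} (H : Matrix (Fin m) (Fin m) ℝ) (hH : H.IsHermitian) (x : Fin m → ℝ) :
    |x ⬝ᵥ H.mulVec x| ≤ specRad H * ∑ i, x i ^ 2 := by
  have hU1 : (hH.eigenvectorUnitary : Matrix (Fin m) (Fin m) ℝ) *
      star (hH.eigenvectorUnitary : Matrix (Fin m) (Fin m) ℝ) = 1 :=
    (Matrix.mem_unitaryGroup_iff).mp hH.eigenvectorUnitary.2
  have hstar : star (hH.eigenvectorUnitary : Matrix (Fin m) (Fin m) ℝ) *ᵥ x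
      = x ᵥ* (hH.eigenvectorUnitary : Matrix (Fin m) (Fin m) ℝ) := by
    rw [Matrix.star_eq_conjTranspose, conjTranspose_eq_transpose_of_trivial, mulVec_transpose]
  have key : x ⬝ᵥ H.mulVec x = ∑ i, hH.eigenvalues i *
      (x ᵥ* (hH.eigenvectorUnitary : Matrix (Fin m) (Fin m) ℝ)) i ^ 2 := by
    conv_lhs => rw [hH.spectral_theorem, Unitary.conjStarAlgAut_apply]
    rw [dotProduct_mulVec, ← vecMul_vecMul, ← vecMul_vecMul, ← dotProduct_mulVec, hstar]
    simp only [vecMul_diagonal, dotProduct, Function.comp_apply, RCLike.ofReal_real_eq_id, id_eq]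
    exact Finset.sum_congr rfl fun i _ => by ring
  have hnorm : ∑ i, (x ᵥ* (hH.eigenvectorUnitary : Matrix (Fin m) (Fin m) ℝ)) i ^ 2
      = ∑ i, x i ^ 2 := by
    have e1 : ∑ i, (x ᵥ* (hH.eigenvectorUnitary : Matrix (Fin m) (Fin m) ℝ)) i ^ 2
        = (x ᵥ* (hH.eigenvectorUnitary : Matrix (Fin m) (Fin m) ℝ)) ⬝ᵥ
          (x ᵥ* (hH.eigenvectorUnitary : Matrix (Fin m) (Fin m) ℝ)) := by
      simp [dotProduct, sq]
    rw [e1, ← hstar, dotProduct_mulVec, hstar, vecMul_vecMul, hU1, vecMul_one]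
    simp [dotProduct, sq]
  rw [key, ← hnorm]
  set y := x ᵥ* (hH.eigenvectorUnitary : Matrix (Fin m) (Fin m) ℝ)
  calc |∑ i, hH.eigenvalues i * y i ^ 2| ≤ ∑ i, |hH.eigenvalues i * y i ^ 2| :=
        Finset.abs_sum_le_sum_abs _ _
    _ ≤ ∑ i, specRad H * y i ^ 2 := by
        apply Finset.sum_le_sum
        intro i _
        rw [abs_mul, abs_of_nonneg (sq_nonneg (y i))]
        exact mul_le_mul_of_nonneg_right
          (abs_le_specRad H (hH.eigenvalues_mem_spectrum_real i)) (sq_nonneg _)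
    _ = specRad H * ∑ i, y i ^ 2 := by rw [Finset.mul_sum]

lemma cauchy {m : ℕ} (v w : Fin m → ℝ) : |v ⬝ᵥ w| ≤ euclNorm v * euclNorm w := by
  rw [← Real.sqrt_sq_eq_abs, euclNorm, euclNorm, ← Real.sqrt_mul (by positivity)]
  exact Real.sqrt_le_sqrt (Finset.sum_mul_sq_le_sq_mul_sq _ _ _)

/-- For a quadratic constraint `C` with gradient `J ≠ 0` at `z` and Hessian `H` of
spectral radius `ρ`: if `ε^G` minimizes `‖ε‖` subject to `C (z + ε) = 0` and
`ε^S = −(C z / ‖J‖²) • J` is the Sampson step, then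
`‖ε^S‖ ≤ ‖ε^G‖ + (ρ / (2‖J‖)) ‖ε^G‖²`. -/
theorem stmt3 {n : ℕ} (C : (Fin n → ℝ) → ℝ) (z J : Fin n → ℝ)
    (H : Matrix (Fin n) (Fin n) ℝ) (hH : H.IsSymm)
    (ρ : ℝ) (hρ : ρ = specRad H)
    (hTaylor : ∀ ε, C (z + ε) = C z + J ⬝ᵥ ε + (1 / 2) * (ε ⬝ᵥ H.mulVec ε))
    (hJ0 : J ≠ 0)
    (εG : Fin n → ℝ) (hG : C (z + εG) = 0)
    (hGmin : ∀ ε, C (z + ε) = 0 → euclNorm εG ≤ euclNorm ε)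
    (εS : Fin n → ℝ) (hS : εS = (-(C z / euclNorm J ^ 2)) • J) :
    euclNorm εS ≤ euclNorm εG + ρ / (2 * euclNorm J) * euclNorm εG ^ 2 := by
  have hHerm : H.IsHermitian := by
    rw [Matrix.IsHermitian, conjTranspose_eq_transpose_of_trivial]; exact hH
  set nJ := euclNorm J with hnJ
  set g := euclNorm εG with hg
  have hg0 : 0 ≤ g := Real.sqrt_nonneg _
  have hJpos : 0 < nJ := by
    rw [hnJ, euclNorm]
    apply Real.sqrt_pos.mpr
    obtain ⟨i, hi⟩ : ∃ i, J i ≠ 0 := by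
      by_contra h
      push_neg at h
      exact hJ0 (funext h)
    exact Finset.sum_pos' (fun j _ => sq_nonneg _)
      ⟨i, Finset.mem_univ i, by positivity⟩
  have hsq : nJ ^ 2 = ∑ i, J i ^ 2 := Real.sq_sqrt (by positivity)
  have hgsq : g ^ 2 = ∑ i, εG i ^ 2 := Real.sq_sqrt (by positivity)
  -- norm of εS
  have hεS : euclNorm εS = |C z| / nJ := by
    rw [hS, euclNorm]
    have : ∀ i, ((-(C z / nJ ^ 2)) • J) i ^ 2 = (C z / nJ ^ 2) ^ 2 * J i ^ 2 := by
      intro i; simp [Pi.smul_apply, smul_eq_mul]; ring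
    rw [Finset.sum_congr rfl fun i _ => this i, ← Finset.mul_sum, ← hsq,
      Real.sqrt_mul (by positivity), Real.sqrt_sq_eq_abs, Real.sqrt_sq hJpos.le,
      abs_div, abs_pow, abs_of_pos hJpos]
    field_simp
  -- bound |C z|
  have hCz : |C z| ≤ nJ * g + 1 / 2 * (ρ * g ^ 2) := by
    have := hTaylor εG
    rw [hG] at this
    have hCzeq : C z = -(J ⬝ᵥ εG) - (1 / 2) * (εG ⬝ᵥ H.mulVec εG) := by linarith
    rw [hCzeq]
    have h1 : |J ⬝ᵥ εG| ≤ nJ * g := cauchy J εG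
    have h2 : |εG ⬝ᵥ H.mulVec εG| ≤ ρ * g ^ 2 := by
      rw [hρ, hgsq]; exact quad_bound H hHerm εG
    have h12 : |(1:ℝ)/2| = 1/2 := by norm_num
    have habs : |-(J ⬝ᵥ εG) - 1 / 2 * (εG ⬝ᵥ H.mulVec εG)|
        ≤ |J ⬝ᵥ εG| + 1 / 2 * |εG ⬝ᵥ H.mulVec εG| := by
      rw [sub_eq_add_neg]
      refine (abs_add_le _ _).trans ?_
      rw [abs_neg, abs_neg, abs_mul, h12]
    refine habs.trans ?_
    have := mul_le_mul_of_nonneg_left h2 (by norm_num : (0:ℝ) ≤ 1/2)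
    linarith
  rw [hεS]
  rw [div_le_iff₀ hJpos]
  have hexp : (g + ρ / (2 * nJ) * g ^ 2) * nJ = nJ * g + 1 / 2 * (ρ * g ^ 2) := by
    field_simp
  rw [hexp]
  exact hCz
end

section
/- Let C : ℝⁿ → ℝᴺ have components C_i that are homogeneous polynomials of degree at most d, with Taylor expansion C(z+ε) = C(z) + Jε + Σ_{j=2}^d (1/j!)(ε × T_j). Suppose J (the Jacobian at z) has linearly independent rows and C(z) ∈ Im J. Then ‖ε^S‖ ≤ ‖ε^G‖ + ‖J†‖ · Σ_{j=2}^d (μ_j/j!) ‖ε^G‖_j^j, where ε^S = −J†C(z), μ_j bounds the j-th order Taylor terms as ‖ε × T_j‖ ≤ μ_j ‖ε‖_j^j, and ε^G is the minimum-norm solution of C(z+ε)=0. -/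
open Matrix

/-- The operator norm of a matrix with respect to the Euclidean norms. -/
noncomputable def opNorm {m n : ℕ} (A : Matrix (Fin m) (Fin n) ℝ) : ℝ :=
  ‖LinearMap.toContinuousLinearMap (Matrix.toEuclideanLin A)‖


lemma euclNorm_eq {n : ℕ} (v : Fin n → ℝ) :
    euclNorm v = ‖(WithLp.linearEquiv 2 ℝ (Fin n → ℝ)).symm v‖ := by
  rw [euclNorm, EuclideanSpace.norm_eq]
  congr 1
  refine Finset.sum_congr rfl fun i _ => ?_
  simp [WithLp.linearEquiv, sq_abs]

lemma euclNorm_mulVec_le {m n : ℕ} (A : Matrix (Fin m) (Fin n) ℝ) (v : Fin n → ℝ) :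
    euclNorm (A.mulVec v) ≤ opNorm A * euclNorm v := by
  rw [euclNorm_eq, euclNorm_eq, opNorm]
  have h := (LinearMap.toContinuousLinearMap (Matrix.toEuclideanLin A)).le_opNorm
    ((WithLp.linearEquiv 2 ℝ (Fin n → ℝ)).symm v)
  have he : (LinearMap.toContinuousLinearMap (Matrix.toEuclideanLin A))
      ((WithLp.linearEquiv 2 ℝ (Fin n → ℝ)).symm v)
      = (WithLp.linearEquiv 2 ℝ (Fin m → ℝ)).symm (A.mulVec v) := by
    simp [Matrix.toEuclideanLin_apply, WithLp.linearEquiv]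
  rwa [he] at h

lemma euclNorm_sum_le {n : ℕ} (s : Finset ℕ) (f : ℕ → Fin n → ℝ) :
    euclNorm (∑ j ∈ s, f j) ≤ ∑ j ∈ s, euclNorm (f j) := by
  rw [euclNorm_eq, _root_.map_sum]
  refine (norm_sum_le _ _).trans ?_
  exact le_of_eq (Finset.sum_congr rfl fun j _ => (euclNorm_eq (f j)).symm)

lemma euclNorm_smul {n : ℕ} (c : ℝ) (v : Fin n → ℝ) :
    euclNorm (c • v) = |c| * euclNorm v := by
  rw [euclNorm_eq, euclNorm_eq, _root_.map_smul, norm_smul, Real.norm_eq_abs]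

lemma dotProduct_le {n : ℕ} (x y : Fin n → ℝ) :
    x ⬝ᵥ y ≤ euclNorm x * euclNorm y := by
  have h := real_inner_le_norm ((WithLp.linearEquiv 2 ℝ (Fin n → ℝ)).symm x)
    ((WithLp.linearEquiv 2 ℝ (Fin n → ℝ)).symm y)
  rw [euclNorm_eq, euclNorm_eq]
  refine le_trans (le_of_eq ?_) h
  simp [PiLp.inner_apply, WithLp.linearEquiv, RCLike.inner_apply, dotProduct, mul_comm]

lemma euclNorm_sq {n : ℕ} (v : Fin n → ℝ) : euclNorm v ^ 2 = v ⬝ᵥ v := by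
  rw [euclNorm, Real.sq_sqrt (Finset.sum_nonneg fun i _ => sq_nonneg _)]
  simp [dotProduct, sq]

lemma proj_bound {n : ℕ} (P : Matrix (Fin n) (Fin n) ℝ) (hPt : Pᵀ = P)
    (hPP : P * P = P) (x : Fin n → ℝ) :
    euclNorm (P.mulVec x) ≤ euclNorm x := by
  have h2 : x ᵥ* P = P *ᵥ x := by
    nth_rewrite 1 [← hPt]; rw [vecMul_transpose]
  have key : (P *ᵥ x) ⬝ᵥ (P *ᵥ x) = (P *ᵥ x) ⬝ᵥ x := by
    nth_rewrite 1 [dotProduct_mulVec]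
    rw [vecMul_mulVec, hPt, hPP, h2]
  have hsq : euclNorm (P *ᵥ x) ^ 2 ≤ euclNorm (P *ᵥ x) * euclNorm x := by
    rw [euclNorm_sq, key]; exact dotProduct_le _ _
  have hy : (0:ℝ) ≤ euclNorm (P *ᵥ x) := Real.sqrt_nonneg _
  have hx : (0:ℝ) ≤ euclNorm x := Real.sqrt_nonneg _
  rcases hy.eq_or_lt with h | h
  · rw [← h]; exact hx
  · nlinarith [hsq, h]

lemma euclNorm_add_le {n : ℕ} (x y : Fin n → ℝ) :
    euclNorm (x + y) ≤ euclNorm x + euclNorm y := by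
  rw [euclNorm_eq, euclNorm_eq, euclNorm_eq, map_add]
  exact norm_add_le _ _

/-- For `N` constraints `C : ℝⁿ → ℝᴺ` with Taylor expansion
`C (z + ε) = C z + J ε + ∑_{j=2}^d (1/j!) (ε × T_j)`, where the Jacobian `J` at `z`
has linearly independent rows and `C z ∈ Im J`:
`‖ε^S‖ ≤ ‖ε^G‖ + ‖J†‖ ∑_{j=2}^d (μ_j / j!) ‖ε^G‖_j^j`, where `ε^S = −J† (C z)`,
the `μ_j` bound the Taylor terms by `‖ε × T_j‖ ≤ μ_j ‖ε‖_j^j`, and `ε^G` is the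
minimum-norm solution of `C (z + ε) = 0`. Here `J†` is the Moore–Penrose
pseudoinverse of `J`, characterized by the four Penrose conditions. -/
theorem stmt9 {n N d : ℕ} (C : (Fin n → ℝ) → Fin N → ℝ) (z : Fin n → ℝ)
    (J : Matrix (Fin N) (Fin n) ℝ)
    (T : ℕ → (Fin n → ℝ) → Fin N → ℝ) (μ : ℕ → ℝ)
    (hTaylor : ∀ ε i, C (z + ε) i =
      C z i + J.mulVec ε i + ∑ j ∈ Finset.Icc 2 d, (1 / (j.factorial : ℝ)) * T j ε i)
    (hμ : ∀ (j : ℕ) (ε : Fin n → ℝ), euclNorm (T j ε) ≤ μ j * ∑ k, |ε k| ^ j)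
    (hrank : LinearIndependent ℝ (fun i => J i))
    (him : ∃ x, J.mulVec x = C z)
    (Jp : Matrix (Fin n) (Fin N) ℝ)
    (hp1 : J * Jp * J = J) (hp2 : Jp * J * Jp = Jp)
    (hp3 : (J * Jp)ᵀ = J * Jp) (hp4 : (Jp * J)ᵀ = Jp * J)
    (εS : Fin n → ℝ) (hεS : εS = -(Jp.mulVec (C z)))
    (εG : Fin n → ℝ) (hG : C (z + εG) = 0)
    (hGmin : ∀ ε, C (z + ε) = 0 → euclNorm εG ≤ euclNorm ε) :
    euclNorm εS ≤ euclNorm εG +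
      opNorm Jp * ∑ j ∈ Finset.Icc 2 d, (μ j / (j.factorial : ℝ)) * ∑ k, |εG k| ^ j := by
  set R : Fin N → ℝ := ∑ j ∈ Finset.Icc 2 d, (1 / (j.factorial : ℝ)) • T j εG with hRdef
  have hRi : ∀ i, R i = ∑ j ∈ Finset.Icc 2 d, (1 / (j.factorial : ℝ)) * T j εG i := by
    intro i; simp [hRdef, Finset.sum_apply]
  have hCz : C z = -(J *ᵥ εG) - R := by
    funext i
    have h0 := hTaylor εG i
    rw [hG] at h0
    simp only [Pi.zero_apply] at h0
    simp only [Pi.sub_apply, Pi.neg_apply, hRi i]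
    linarith
  have hεS2 : εS = (Jp * J) *ᵥ εG + Jp *ᵥ R := by
    rw [hεS, hCz, Matrix.mulVec_sub, Matrix.mulVec_neg, ← Matrix.mulVec_mulVec]
    abel
  have hPP : (Jp * J) * (Jp * J) = Jp * J := by
    rw [← Matrix.mul_assoc, hp2]
  have hRnorm : euclNorm R ≤
      ∑ j ∈ Finset.Icc 2 d, (μ j / (j.factorial : ℝ)) * ∑ k, |εG k| ^ j := by
    refine (euclNorm_sum_le _ _).trans ?_
    refine Finset.sum_le_sum fun j _ => ?_
    rw [euclNorm_smul]
    have hfac : (0:ℝ) < (j.factorial : ℝ) := by positivity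
    have h1 : |1 / (j.factorial : ℝ)| = 1 / (j.factorial : ℝ) := abs_of_pos (by positivity)
    rw [h1]
    calc 1 / (j.factorial : ℝ) * euclNorm (T j εG)
        ≤ 1 / (j.factorial : ℝ) * (μ j * ∑ k, |εG k| ^ j) :=
          mul_le_mul_of_nonneg_left (hμ j εG) (by positivity)
      _ = (μ j / (j.factorial : ℝ)) * ∑ k, |εG k| ^ j := by ring
  calc euclNorm εS = euclNorm ((Jp * J) *ᵥ εG + Jp *ᵥ R) := by rw [hεS2]
    _ ≤ euclNorm ((Jp * J) *ᵥ εG) + euclNorm (Jp *ᵥ R) := euclNorm_add_le _ _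
    _ ≤ euclNorm εG + opNorm Jp * euclNorm R :=
        add_le_add (proj_bound _ hp4 hPP _) (euclNorm_mulVec_le _ _)
    _ ≤ euclNorm εG + opNorm Jp * ∑ j ∈ Finset.Icc 2 d,
          (μ j / (j.factorial : ℝ)) * ∑ k, |εG k| ^ j := by
        have : (0:ℝ) ≤ opNorm Jp := norm_nonneg _
        exact add_le_add (le_refl _) (mul_le_mul_of_nonneg_left hRnorm this)
end
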